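/- arXiv:1705.07684 — 3 statements merged into one kernel-verified Lean document; each statement's English description precedes it below -/
import Mathlib

section
/- Let f, ν, n_f and constants ϑ, ω₁, ω₂, λ, ρ be as in the majorant setting, and let {θ_k} ⊂ [0, λ²/2]. Define the real sequence t₀ ∈ (0, ρ), t_{k+1} := ω₁(1+ϑ)(1+√(2θ_k))|n_f(t_k)| + (ω₁[(1+ϑ)√(2θ_k) + ϑ] + ω₂)t_k for k ≥ 0. Then {t_k} is well defined (t_k ∈ (0, ρ) for all k), strictly decreasing, converges to 0, and limsup_{k→∞} t_{k+1}/t_k = ω₁[(1+ϑ)√(2θ̃) + ϑ] + ω₂, where θ̃ := limsup_{k→∞} θ_k. -/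
open Filter Set

set_option maxHeartbeats 1000000 in
theorem stmt_13 (R : ℝ) (hR : 0 < R) (f f' : ℝ → ℝ)
    (hderiv : ∀ t ∈ Set.Ico 0 R, HasDerivWithinAt f (f' t) (Set.Ico 0 R) t)
    (hcont : ContinuousOn f' (Set.Ico 0 R))
    (h1a : f 0 = 0) (h1b : f' 0 = -1)
    (h2 : StrictMonoOn f' (Set.Ico 0 R))
    (ν : ℝ) (hν : ν = sSup {t | t ∈ Set.Ico 0 R ∧ f' t < 0})
    (nf : ℝ → ℝ) (hnf : ∀ t, nf t = t - f t / f' t)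
    (ϑ ω₁ ω₂ lam : ℝ)
    (hϑ0 : 0 ≤ ϑ) (hϑ1 : ϑ < 1) (hω₂0 : 0 ≤ ω₂) (hω₁₂ : ω₂ < ω₁)
    (hωϑ : ω₁ * ϑ + ω₂ < 1)
    (hlam0 : 0 ≤ lam) (hlam : lam < (1 - ω₂ - ω₁ * ϑ) / (ω₁ * (1 + ϑ)))
    (ρ : ℝ)
    (hρ : ρ = sSup {δ | δ ∈ Set.Ioo 0 ν ∧ ∀ t ∈ Set.Ioo 0 δ,
      ω₁ * (1 + ϑ) * (1 + lam) * (f t / (t * f' t) - 1)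
        + ω₁ * ((1 + ϑ) * lam + ϑ) + ω₂ < 1})
    (θ : ℕ → ℝ) (hθ : ∀ k, θ k ∈ Set.Icc 0 (lam ^ 2 / 2))
    (tk : ℕ → ℝ) (ht0 : tk 0 ∈ Set.Ioo 0 ρ)
    (htk : ∀ k, tk (k + 1) =
      ω₁ * (1 + ϑ) * (1 + Real.sqrt (2 * θ k)) * |nf (tk k)|
        + (ω₁ * ((1 + ϑ) * Real.sqrt (2 * θ k) + ϑ) + ω₂) * tk k) :
    (∀ k, tk k ∈ Set.Ioo 0 ρ) ∧ StrictAnti tk ∧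
      Filter.Tendsto tk Filter.atTop (nhds 0) ∧
      Filter.limsup (fun k => tk (k + 1) / tk k) Filter.atTop =
        ω₁ * ((1 + ϑ) * Real.sqrt (2 * Filter.limsup θ Filter.atTop) + ϑ) + ω₂ := by
  have hω₁ : 0 < ω₁ := lt_of_le_of_lt hω₂0 hω₁₂
  have hϑp : (0:ℝ) < 1 + ϑ := by linarith
  -- ν facts
  have hT0 : (0:ℝ) ∈ {t | t ∈ Set.Ico 0 R ∧ f' t < 0} := ⟨⟨le_refl 0, hR⟩, by rw [h1b]; norm_num⟩
  have hνR : ν ≤ R := by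
    rw [hν]; exact csSup_le ⟨0, hT0⟩ (fun x hx => hx.1.2.le)
  have hf'neg : ∀ t, 0 ≤ t → t < ν → f' t < 0 := by
    intro t ht0' htν
    rw [hν] at htν
    obtain ⟨s, hs, hts⟩ := exists_lt_of_lt_csSup ⟨0, hT0⟩ htν
    exact (h2 ⟨ht0', hts.trans hs.1.2⟩ hs.1 hts).trans hs.2
  -- ρ facts
  have hρpos : 0 < ρ := lt_trans ht0.1 ht0.2
  have hSne : Set.Nonempty {δ | δ ∈ Set.Ioo 0 ν ∧ ∀ t ∈ Set.Ioo 0 δ,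
      ω₁ * (1 + ϑ) * (1 + lam) * (f t / (t * f' t) - 1)
        + ω₁ * ((1 + ϑ) * lam + ϑ) + ω₂ < 1} := by
    by_contra h
    rw [Set.not_nonempty_iff_eq_empty] at h
    rw [hρ, h, Real.sSup_empty] at hρpos
    exact lt_irrefl 0 hρpos
  have hρν : ρ ≤ ν := by
    rw [hρ]; exact csSup_le hSne (fun δ hδ => hδ.1.2.le)
  have hΦ : ∀ t, 0 < t → t < ρ →
      ω₁ * (1 + ϑ) * (1 + lam) * (f t / (t * f' t) - 1)
        + ω₁ * ((1 + ϑ) * lam + ϑ) + ω₂ < 1 := by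
    intro t h0 htρ
    rw [hρ] at htρ
    obtain ⟨δ, hδ, htδ⟩ := exists_lt_of_lt_csSup hSne htρ
    exact hδ.2 t ⟨h0, htδ⟩
  -- convexity
  have hfc : ContinuousOn f (Set.Ico 0 R) := fun x hx => (hderiv x hx).continuousWithinAt
  have hdAt : ∀ t, 0 < t → t < R → HasDerivAt f (f' t) t := fun t h0 hRt =>
    (hderiv t ⟨h0.le, hRt⟩).hasDerivAt (Ico_mem_nhds h0 hRt)
  have hkey : ∀ t, 0 < t → t < ν → f t < t * f' t := by
    intro t h0 htν
    have htR : t < R := lt_of_lt_of_le htν hνR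
    obtain ⟨c, hc, hc'⟩ := exists_hasDerivAt_eq_slope f f' h0
      (hfc.mono (fun x hx => ⟨hx.1, lt_of_le_of_lt hx.2 htR⟩))
      (fun x hx => hdAt x hx.1 (lt_trans hx.2 htR))
    rw [h1a, sub_zero, sub_zero] at hc'
    have hft : f' c * t = f t := by
      field_simp at hc'
      linarith [hc']
    have hcc : f' c < f' t := h2 ⟨hc.1.le, lt_trans hc.2 htR⟩ ⟨h0.le, htR⟩ hc.2
    nlinarith [mul_lt_mul_of_pos_right hcc h0]
  have hnfabs : ∀ t, 0 < t → t < ν → |nf t| = f t / f' t - t ∧ 0 < f t / f' t - t := by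
    intro t h0 htν
    have h1' := hkey t h0 htν
    have h2' := hf'neg t h0.le htν
    have hlt : t < f t / f' t := by
      rw [lt_div_iff_of_neg h2']; linarith
    constructor
    · rw [hnf t, abs_of_neg (by linarith : t - f t / f' t < 0)]; ring
    · linarith
  -- monotonicity in s
  have hsmono : ∀ t s, 0 ≤ s → s ≤ lam → 0 < t →
      ω₁ * (1 + ϑ) * (1 + s) * |nf t| + (ω₁ * ((1 + ϑ) * s + ϑ) + ω₂) * t ≤
      ω₁ * (1 + ϑ) * (1 + lam) * |nf t| + (ω₁ * ((1 + ϑ) * lam + ϑ) + ω₂) * t := by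
    intro t s hs0 hsl h0
    have h1' : 0 ≤ ω₁ * (1 + ϑ) * (lam - s) :=
      mul_nonneg (mul_nonneg hω₁.le hϑp.le) (by linarith)
    nlinarith [mul_nonneg h1' (abs_nonneg (nf t)), mul_nonneg h1' h0.le]
  -- single step bounds
  have hstep : ∀ t, 0 < t → t < ρ → ∀ s, 0 ≤ s → s ≤ lam →
      0 < ω₁ * (1 + ϑ) * (1 + s) * |nf t| + (ω₁ * ((1 + ϑ) * s + ϑ) + ω₂) * t ∧
      ω₁ * (1 + ϑ) * (1 + s) * |nf t| + (ω₁ * ((1 + ϑ) * s + ϑ) + ω₂) * t < t := by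
    intro t h0 htρ s hs0 hsl
    have htν : t < ν := lt_of_lt_of_le htρ hρν
    obtain ⟨habs, hpos⟩ := hnfabs t h0 htν
    have hΦt := hΦ t h0 htρ
    have hf't := hf'neg t h0.le htν
    have hne : f' t ≠ 0 := ne_of_lt hf't
    have hid : t * (f t / (t * f' t) - 1) = f t / f' t - t := by
      field_simp
    constructor
    · have hterm1 : 0 < ω₁ * (1 + ϑ) * (1 + s) * |nf t| := by
        rw [habs]
        exact mul_pos (mul_pos (mul_pos hω₁ hϑp) (by linarith)) hpos
      have hterm2 : 0 ≤ (ω₁ * ((1 + ϑ) * s + ϑ) + ω₂) * t :=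
        mul_nonneg (add_nonneg (mul_nonneg hω₁.le
          (add_nonneg (mul_nonneg hϑp.le hs0) hϑ0)) hω₂0) h0.le
      linarith
    · have hA : ω₁ * (1 + ϑ) * (1 + lam) * |nf t| + (ω₁ * ((1 + ϑ) * lam + ϑ) + ω₂) * t < t := by
        have hmul := mul_lt_mul_of_pos_right hΦt h0
        have hid2 : ω₁ * (1 + ϑ) * (1 + lam) * (t * (f t / (t * f' t) - 1)) =
            ω₁ * (1 + ϑ) * (1 + lam) * (f t / f' t - t) := by rw [hid]
        rw [habs]
        nlinarith [hmul, hid2]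
      linarith [hsmono t s hs0 hsl h0]
  -- sqrt bounds
  have hs0 : ∀ k, 0 ≤ Real.sqrt (2 * θ k) := fun k => Real.sqrt_nonneg _
  have hsl : ∀ k, Real.sqrt (2 * θ k) ≤ lam := by
    intro k
    calc Real.sqrt (2 * θ k) ≤ Real.sqrt (lam ^ 2) :=
          Real.sqrt_le_sqrt (by linarith [(hθ k).2])
      _ = lam := Real.sqrt_sq hlam0
  -- induction
  have hkeystep : ∀ k, tk k ∈ Set.Ioo 0 ρ → tk (k + 1) ∈ Set.Ioo 0 ρ ∧ tk (k + 1) < tk k := by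
    intro k hk
    obtain ⟨hp, hl⟩ := hstep (tk k) hk.1 hk.2 _ (hs0 k) (hsl k)
    rw [← htk k] at hp hl
    exact ⟨⟨hp, lt_trans hl hk.2⟩, hl⟩
  have hmem : ∀ k, tk k ∈ Set.Ioo 0 ρ := by
    intro k
    induction k with
    | zero => exact ht0
    | succ n ih => exact (hkeystep n ih).1
  have hdec : StrictAnti tk := strictAnti_nat_of_succ_lt (fun k => (hkeystep k (hmem k)).2)
  -- convergence to 0
  have hbdd : BddBelow (Set.range tk) := ⟨0, by rintro x ⟨k, rfl⟩; exact (hmem k).1.le⟩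
  have hconv : Filter.Tendsto tk Filter.atTop (nhds (⨅ k, tk k)) :=
    tendsto_atTop_ciInf hdec.antitone hbdd
  have hL0 : 0 ≤ ⨅ k, tk k := le_ciInf fun k => (hmem k).1.le
  have hLρ : (⨅ k, tk k) < ρ := lt_of_le_of_lt (ciInf_le hbdd 0) (hmem 0).2
  have hLzero : (⨅ k, tk k) = 0 := by
    by_contra hne
    set L := ⨅ k, tk k with hLdef
    have hLpos : 0 < L := lt_of_le_of_ne hL0 (Ne.symm hne)
    have hLν : L < ν := lt_of_lt_of_le hLρ hρν
    have hLR : L < R := lt_of_lt_of_le hLν hνR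
    have hfL : ContinuousAt f L := (hdAt L hLpos hLR).continuousAt
    have hf'L : ContinuousAt f' L :=
      (hcont L ⟨hLpos.le, hLR⟩).continuousAt (Ico_mem_nhds hLpos hLR)
    have hne' : f' L ≠ 0 := ne_of_lt (hf'neg L hLpos.le hLν)
    have hG : ContinuousAt (fun t => ω₁ * (1 + ϑ) * (1 + lam) * |t - f t / f' t|
        + (ω₁ * ((1 + ϑ) * lam + ϑ) + ω₂) * t) L :=
      (continuousAt_const.mul ((continuousAt_id.sub (hfL.div hf'L hne')).abs)).add
        (continuousAt_const.mul continuousAt_id)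
    have hGL : Filter.Tendsto (fun k => ω₁ * (1 + ϑ) * (1 + lam) * |nf (tk k)|
        + (ω₁ * ((1 + ϑ) * lam + ϑ) + ω₂) * tk k) Filter.atTop
        (nhds (ω₁ * (1 + ϑ) * (1 + lam) * |L - f L / f' L|
          + (ω₁ * ((1 + ϑ) * lam + ϑ) + ω₂) * L)) := by
      exact (hG.tendsto.comp hconv).congr fun k => by
        simp only [Function.comp_apply, hnf]
    have hle : ∀ k, tk (k + 1) ≤ ω₁ * (1 + ϑ) * (1 + lam) * |nf (tk k)|
        + (ω₁ * ((1 + ϑ) * lam + ϑ) + ω₂) * tk k := by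
      intro k
      rw [htk k]
      exact hsmono (tk k) _ (hs0 k) (hsl k) (hmem k).1
    have htail : Filter.Tendsto (fun k => tk (k + 1)) Filter.atTop (nhds L) :=
      hconv.comp (tendsto_add_atTop_nat 1)
    have hLle : L ≤ ω₁ * (1 + ϑ) * (1 + lam) * |L - f L / f' L|
        + (ω₁ * ((1 + ϑ) * lam + ϑ) + ω₂) * L :=
      le_of_tendsto_of_tendsto' htail hGL hle
    have hGlt := (hstep L hLpos hLρ lam hlam0 le_rfl).2
    rw [hnf L] at hGlt
    linarith
  rw [hLzero] at hconv
  -- ratio tendsto facts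
  have htkR : ∀ k, tk k < R := fun k =>
    lt_of_lt_of_le (lt_of_lt_of_le (hmem k).2 hρν) hνR
  have htkν : ∀ k, tk k < ν := fun k => lt_of_lt_of_le (hmem k).2 hρν
  have hslope := hasDerivWithinAt_iff_tendsto_slope.mp (hderiv 0 ⟨le_refl 0, hR⟩)
  have htkin : Filter.Tendsto tk Filter.atTop (nhdsWithin 0 (Set.Ico 0 R \ {0})) :=
    tendsto_nhdsWithin_iff.mpr ⟨hconv, Filter.Eventually.of_forall
      (fun k => ⟨⟨(hmem k).1.le, htkR k⟩, ne_of_gt (hmem k).1⟩)⟩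
  have h4 : Filter.Tendsto (fun k => f (tk k) / tk k) Filter.atTop (nhds (-1)) := by
    have h3 := hslope.comp htkin
    rw [h1b] at h3
    exact h3.congr fun k => by
      rw [Function.comp_apply, slope_def_field, h1a, sub_zero, sub_zero]
  have hf'0 : Filter.Tendsto (fun k => f' (tk k)) Filter.atTop (nhds (-1)) := by
    have hin : Filter.Tendsto tk Filter.atTop (nhdsWithin 0 (Set.Ico 0 R)) :=
      tendsto_nhdsWithin_iff.mpr ⟨hconv, Filter.Eventually.of_forall
        (fun k => ⟨(hmem k).1.le, htkR k⟩)⟩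
    have := (hcont 0 ⟨le_refl 0, hR⟩).tendsto.comp hin
    rw [h1b] at this
    exact this
  have hr1 : Filter.Tendsto (fun k => f (tk k) / (tk k * f' (tk k))) Filter.atTop (nhds 1) := by
    have h5 := h4.div hf'0 (by norm_num : (-1:ℝ) ≠ 0)
    have h6 : ∀ k, f (tk k) / tk k / f' (tk k) = f (tk k) / (tk k * f' (tk k)) := by
      intro k; rw [div_div]
    have h7 := h5.congr h6
    norm_num at h7
    exact h7
  have hr0 : Filter.Tendsto (fun k => |nf (tk k)| / tk k) Filter.atTop (nhds 0) := by
    have h8 := hr1.sub_const 1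
    norm_num at h8
    refine h8.congr fun k => ?_
    obtain ⟨habs, _⟩ := hnfabs (tk k) (hmem k).1 (htkν k)
    rw [habs]
    have h0 : tk k ≠ 0 := ne_of_gt (hmem k).1
    have hne : f' (tk k) ≠ 0 := ne_of_lt (hf'neg (tk k) (hmem k).1.le (htkν k))
    field_simp
  -- limsup computation
  set e : ℕ → ℝ := fun k => ω₁ * (1 + ϑ) * (1 + Real.sqrt (2 * θ k)) * (|nf (tk k)| / tk k)
    with he_def
  set w : ℕ → ℝ := fun k => ω₁ * ((1 + ϑ) * Real.sqrt (2 * θ k) + ϑ) + ω₂ with hw_def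
  have he : Filter.Tendsto e Filter.atTop (nhds 0) := by
    have hub : Filter.Tendsto (fun k => ω₁ * (1 + ϑ) * (1 + lam) * (|nf (tk k)| / tk k))
        Filter.atTop (nhds 0) := by
      have := hr0.const_mul (ω₁ * (1 + ϑ) * (1 + lam))
      simpa using this
    refine squeeze_zero (fun k => ?_) (fun k => ?_) hub
    · exact mul_nonneg (mul_nonneg (mul_nonneg hω₁.le hϑp.le) (by linarith [hs0 k]))
        (div_nonneg (abs_nonneg _) (hmem k).1.le)
    · have h9 : ω₁ * (1 + ϑ) * (1 + Real.sqrt (2 * θ k)) ≤ ω₁ * (1 + ϑ) * (1 + lam) := by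
        nlinarith [mul_nonneg (mul_nonneg hω₁.le hϑp.le)
          (by linarith [hsl k] : (0:ℝ) ≤ lam - Real.sqrt (2 * θ k))]
      exact mul_le_mul_of_nonneg_right h9 (div_nonneg (abs_nonneg _) (hmem k).1.le)
  have hq : ∀ k, tk (k + 1) / tk k = (e + w) k := by
    intro k
    have h0 : tk k ≠ 0 := ne_of_gt (hmem k).1
    simp only [he_def, hw_def, Pi.add_apply]
    rw [htk k]
    field_simp
    try ring
  -- boundedness facts
  have hwhi : ∀ k, w k ≤ ω₁ * ((1 + ϑ) * lam + ϑ) + ω₂ := by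
    intro k
    simp only [hw_def]
    nlinarith [mul_nonneg (mul_nonneg hω₁.le hϑp.le)
      (by linarith [hsl k] : (0:ℝ) ≤ lam - Real.sqrt (2 * θ k))]
  have hwlo : ∀ k, ω₁ * ϑ + ω₂ ≤ w k := by
    intro k
    simp only [hw_def]
    nlinarith [mul_nonneg (mul_nonneg hω₁.le hϑp.le) (hs0 k)]
  have hwbdd_le : IsBoundedUnder (· ≤ ·) Filter.atTop w := isBoundedUnder_of ⟨_, hwhi⟩
  have hwbdd_ge : IsBoundedUnder (· ≥ ·) Filter.atTop w := isBoundedUnder_of ⟨_, hwlo⟩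
  have hwcobdd : IsCoboundedUnder (· ≤ ·) Filter.atTop w := hwbdd_ge.isCoboundedUnder_le
  have he_le : IsBoundedUnder (· ≤ ·) Filter.atTop e := he.isBoundedUnder_le
  have he_ge : IsBoundedUnder (· ≥ ·) Filter.atTop e := he.isBoundedUnder_ge
  have he_cobdd : IsCoboundedUnder (· ≤ ·) Filter.atTop e := he_ge.isCoboundedUnder_le
  have h_up : Filter.limsup (e + w) Filter.atTop ≤ Filter.limsup w Filter.atTop := by
    have := limsup_add_le he_ge he_le hwcobdd hwbdd_le
    rwa [he.limsup_eq, zero_add] at this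
  have h_lo : Filter.limsup w Filter.atTop ≤ Filter.limsup (e + w) Filter.atTop := by
    have := le_limsup_add hwbdd_le hwcobdd he_le he_ge
    rw [he.liminf_eq, add_zero] at this
    rwa [show w + e = e + w from by funext k; exact add_comm _ _] at this
  have heq2 : Filter.limsup (e + w) Filter.atTop = Filter.limsup w Filter.atTop :=
    le_antisymm h_up h_lo
  -- map limsup through g
  have hθbdd : IsBoundedUnder (· ≤ ·) Filter.atTop θ := isBoundedUnder_of ⟨_, fun k => (hθ k).2⟩
  have hθbdd' : IsBoundedUnder (· ≥ ·) Filter.atTop θ := isBoundedUnder_of ⟨_, fun k => (hθ k).1⟩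
  have hθcobdd : IsCoboundedUnder (· ≤ ·) Filter.atTop θ := hθbdd'.isCoboundedUnder_le
  have hgmono : Monotone (fun x => ω₁ * ((1 + ϑ) * Real.sqrt (2 * x) + ϑ) + ω₂) := by
    intro a b hab
    dsimp only
    have hs : Real.sqrt (2 * a) ≤ Real.sqrt (2 * b) := Real.sqrt_le_sqrt (by linarith)
    nlinarith [mul_nonneg (mul_nonneg hω₁.le hϑp.le) (sub_nonneg.2 hs)]
  have hgcont : ContinuousAt (fun x => ω₁ * ((1 + ϑ) * Real.sqrt (2 * x) + ϑ) + ω₂)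
      (Filter.limsup θ Filter.atTop) := by
    have hsq : Continuous fun x : ℝ => Real.sqrt (2 * x) :=
      Real.continuous_sqrt.comp (continuous_const.mul continuous_id)
    exact ((continuous_const.mul ((continuous_const.mul hsq).add
      continuous_const)).add continuous_const).continuousAt
  have hmap := hgmono.map_limsup_of_continuousAt θ hgcont hθbdd hθcobdd
  have hwg : Filter.limsup w Filter.atTop =
      ω₁ * ((1 + ϑ) * Real.sqrt (2 * Filter.limsup θ Filter.atTop) + ϑ) + ω₂ := by
    rw [hmap]
    exact Filter.limsup_congr (Filter.Eventually.of_forall fun k => rfl)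
  refine ⟨hmem, hdec, hconv, ?_⟩
  calc Filter.limsup (fun k => tk (k + 1) / tk k) Filter.atTop
      = Filter.limsup (e + w) Filter.atTop :=
        Filter.limsup_congr (Filter.Eventually.of_forall hq)
    _ = Filter.limsup w Filter.atTop := heq2
    _ = ω₁ * ((1 + ϑ) * Real.sqrt (2 * Filter.limsup θ Filter.atTop) + ϑ) + ω₂ := hwg
end

section
/- Let K > 0 and 0 < p ≤ 1, and define f : [0, ∞) → ℝ by f(t) = K t^{p+1}/(p+1) − t. Then f satisfies f(0) = 0, f'(0) = −1, f' is strictly increasing, and the function t ↦ [f(t)/f'(t) − t]/t^{p+1} is strictly increasing on (0, ν), where ν := sup{t ≥ 0 : f'(t) < 0} = (1/K)^{1/p}. Moreover, for constants 0 ≤ ϑ < 1, 0 ≤ ω₂ < ω₁ with ω₁ϑ + ω₂ < 1 and 0 ≤ λ < (1 − ω₂ − ω₁ϑ)/(ω₁(1+ϑ)), the quantity ρ := sup{δ ∈ (0, ν) : ω₁(1+ϑ)(1+λ)(f(t)/(t f'(t)) − 1) + ω₁[(1+ϑ)λ + ϑ] + ω₂ < 1 for all t ∈ (0, δ)} equals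 [((1 − ω₁[(1+ϑ)λ + ϑ] − ω₂)(p+1)) / (K(p − ω₁[(1+ϑ)λ + ϑ − p] − ω₂(p+1) + 1))]^{1/p}, and ρ < ν. -/
theorem stmt_14 (K p : ℝ) (hK : 0 < K) (hp0 : 0 < p) (hp1 : p ≤ 1)
    (f f' : ℝ → ℝ)
    (hf : ∀ t, f t = K * t ^ (p + 1) / (p + 1) - t)
    (hf' : ∀ t, f' t = K * t ^ p - 1)
    (ν : ℝ) (hν : ν = sSup {t : ℝ | 0 ≤ t ∧ f' t < 0})
    (ϑ ω₁ ω₂ lam : ℝ)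
    (hϑ0 : 0 ≤ ϑ) (hϑ1 : ϑ < 1) (hω₂0 : 0 ≤ ω₂) (hω₁₂ : ω₂ < ω₁)
    (hωϑ : ω₁ * ϑ + ω₂ < 1)
    (hlam0 : 0 ≤ lam) (hlam : lam < (1 - ω₂ - ω₁ * ϑ) / (ω₁ * (1 + ϑ)))
    (ρ : ℝ)
    (hρ : ρ = sSup {δ | δ ∈ Set.Ioo 0 ν ∧ ∀ t ∈ Set.Ioo 0 δ,
      ω₁ * (1 + ϑ) * (1 + lam) * (f t / (t * f' t) - 1)
        + ω₁ * ((1 + ϑ) * lam + ϑ) + ω₂ < 1}) :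
    (∀ t ∈ Set.Ici (0:ℝ), HasDerivWithinAt f (f' t) (Set.Ici 0) t) ∧
      f 0 = 0 ∧ f' 0 = -1 ∧ StrictMonoOn f' (Set.Ici 0) ∧
      StrictMonoOn (fun t => (f t / f' t - t) / t ^ (p + 1)) (Set.Ioo 0 ν) ∧
      ν = (1 / K) ^ (1 / p) ∧
      ρ = (((1 - ω₁ * ((1 + ϑ) * lam + ϑ) - ω₂) * (p + 1)) /
          (K * (p - ω₁ * ((1 + ϑ) * lam + ϑ - p) - ω₂ * (p + 1) + 1))) ^ (1 / p) ∧
      ρ < ν := by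
  have hp1' : (0:ℝ) < p + 1 := by linarith
  have hp1ne : (p:ℝ) + 1 ≠ 0 := ne_of_gt hp1'
  have hω₁ : 0 < ω₁ := lt_of_le_of_lt hω₂0 hω₁₂
  -- key monotonicity fact for rpow
  have key : ∀ b : ℝ, 0 < b → ∀ t : ℝ, 0 ≤ t → (K * t ^ p < b ↔ t < (b / K) ^ (1 / p)) := by
    intro b hb t ht
    have hbK : (0:ℝ) ≤ b / K := le_of_lt (div_pos hb hK)
    have h1 : ((b / K) ^ (1/p)) ^ p = b / K := by
      rw [one_div]; exact Real.rpow_inv_rpow hbK (ne_of_gt hp0)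
    have h2 : K * t ^ p < b ↔ t ^ p < b / K := by
      rw [lt_div_iff₀ hK, mul_comm]
    rw [h2]
    nth_rewrite 1 [← h1]
    exact Real.rpow_lt_rpow_iff ht (Real.rpow_nonneg hbK _) hp0
  -- value of ν
  have hν0 : (0:ℝ) < (1/K) ^ (1/p) := Real.rpow_pos_of_pos (by positivity) _
  have hset : {t : ℝ | 0 ≤ t ∧ f' t < 0} = Set.Ico 0 ((1/K) ^ (1/p)) := by
    ext t
    simp only [hf', Set.mem_setOf_eq, Set.mem_Ico, sub_neg]
    constructor
    · rintro ⟨ht, h⟩; exact ⟨ht, (key 1 one_pos t ht).1 h⟩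
    · rintro ⟨ht, h⟩; exact ⟨ht, (key 1 one_pos t ht).2 h⟩
  have hνval : ν = (1/K) ^ (1/p) := by rw [hν, hset, csSup_Ico hν0]
  -- derivative
  have hderiv : ∀ t : ℝ, HasDerivAt f (f' t) t := by
    intro t
    have h1 : HasDerivAt (fun x : ℝ => x ^ (p+1)) ((p+1) * t ^ (p+1-1)) t :=
      Real.hasDerivAt_rpow_const (Or.inr (by linarith))
    have h2 := ((h1.const_mul K).div_const (p+1)).sub (hasDerivAt_id t)
    have hfe : f = fun x => K * x ^ (p+1) / (p+1) - x := funext hf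
    rw [hf', hfe]
    refine h2.congr_deriv ?_
    rw [add_sub_cancel_right]
    field_simp
  -- algebraic identities
  have ident1 : ∀ t : ℝ, 0 < t → K * t ^ p < 1 →
      (f t / f' t - t) / t ^ (p+1) = p * K / ((p+1) * (1 - K * t ^ p)) := by
    intro t ht hu
    have htp : (0:ℝ) < t ^ p := Real.rpow_pos_of_pos ht p
    have h1 : t ^ (p+1) = t ^ p * t := by rw [Real.rpow_add ht, Real.rpow_one]
    have h3 : K * t ^ p - 1 ≠ 0 := ne_of_lt (by linarith)
    have h4 : (1 : ℝ) - K * t ^ p ≠ 0 := ne_of_gt (by linarith)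
    have h5 : t ≠ 0 := ne_of_gt ht
    have h6 : t ^ p ≠ 0 := ne_of_gt htp
    rw [hf, hf', h1]
    field_simp
    ring
  have ident2 : ∀ t : ℝ, 0 < t → K * t ^ p < 1 →
      f t / (t * f' t) - 1 = p * (K * t ^ p) / ((p+1) * (1 - K * t ^ p)) := by
    intro t ht hu
    have htp : (0:ℝ) < t ^ p := Real.rpow_pos_of_pos ht p
    have h1 : t ^ (p+1) = t ^ p * t := by rw [Real.rpow_add ht, Real.rpow_one]
    have h3 : K * t ^ p - 1 ≠ 0 := ne_of_lt (by linarith)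
    have h4 : (1 : ℝ) - K * t ^ p ≠ 0 := ne_of_gt (by linarith)
    have h5 : t ≠ 0 := ne_of_gt ht
    rw [hf, hf', h1]
    field_simp
    ring
  -- constants
  set M := ω₁ * ((1 + ϑ) * lam + ϑ) with hM
  set A := ω₁ * (1 + ϑ) * (1 + lam) with hA
  have hA0 : 0 < A := by
    rw [hA]; apply mul_pos (mul_pos hω₁ (by linarith)) (by linarith)
  have hB1 : M + ω₂ < 1 := by
    have hpos : 0 < ω₁ * (1 + ϑ) := mul_pos hω₁ (by linarith)
    rw [lt_div_iff₀ hpos] at hlam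
    have hMe : M = lam * (ω₁ * (1 + ϑ)) + ω₁ * ϑ := by rw [hM]; ring
    linarith
  set D := A * p + (1 - M - ω₂) * (p + 1) with hD
  have hD0 : 0 < D := by
    have h1 := mul_pos hA0 hp0
    have h2 := mul_pos (show (0:ℝ) < 1 - M - ω₂ by linarith) hp1'
    rw [hD]; linarith
  set cst := (1 - M - ω₂) * (p + 1) / D with hcst
  have hcst0 : 0 < cst := div_pos (mul_pos (by linarith) hp1') hD0
  have hcst1 : cst < 1 := by
    rw [hcst, div_lt_one hD0, hD]
    have := mul_pos hA0 hp0
    linarith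
  set tstar := (cst / K) ^ (1/p) with htst
  have htstar0 : 0 < tstar := Real.rpow_pos_of_pos (div_pos hcst0 hK) _
  have htstarν : tstar < ν := by
    rw [hνval, htst]
    exact Real.rpow_lt_rpow (le_of_lt (div_pos hcst0 hK))
      ((div_lt_div_iff_of_pos_right hK).mpr hcst1) (by positivity)
  -- condition equivalence
  have equiv : ∀ t : ℝ, 0 < t → K * t ^ p < 1 →
      (A * (f t / (t * f' t) - 1) + M + ω₂ < 1 ↔ K * t ^ p < cst) := by
    intro t ht hu1
    have htp : (0:ℝ) < t ^ p := Real.rpow_pos_of_pos ht p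
    have hu0 : 0 < K * t ^ p := mul_pos hK htp
    have hden : 0 < (p+1) * (1 - K * t ^ p) := mul_pos hp1' (by linarith)
    rw [ident2 t ht hu1, hcst, lt_div_iff₀ hD0, hD]
    have hrw : A * (p * (K * t ^ p) / ((p+1) * (1 - K * t ^ p)))
        = A * (p * (K * t ^ p)) / ((p+1) * (1 - K * t ^ p)) := by ring
    have hiden : A * (p * (K * t ^ p)) - (1 - M - ω₂) * ((p+1) * (1 - K * t ^ p))
        = K * t ^ p * (A * p + (1 - M - ω₂) * (p+1)) - (1 - M - ω₂) * (p+1) := by ring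
    constructor
    · intro h
      have h' : A * (p * (K * t ^ p)) / ((p+1) * (1 - K * t ^ p)) < 1 - M - ω₂ := by
        rw [← hrw]; linarith
      have h'' := (div_lt_iff₀ hden).1 h'
      linarith
    · intro h
      have h' : A * (p * (K * t ^ p)) < (1 - M - ω₂) * ((p+1) * (1 - K * t ^ p)) := by
        linarith
      have h'' := (div_lt_iff₀ hden).2 h'
      rw [← hrw] at h''
      linarith
  -- the ρ set
  have hsetρ : {δ | δ ∈ Set.Ioo 0 ν ∧ ∀ t ∈ Set.Ioo 0 δ,
      A * (f t / (t * f' t) - 1) + M + ω₂ < 1} = Set.Ioc 0 tstar := by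
    ext δ
    simp only [Set.mem_setOf_eq, Set.mem_Ioo, Set.mem_Ioc]
    constructor
    · rintro ⟨⟨hδ0, hδν⟩, h⟩
      refine ⟨hδ0, ?_⟩
      by_contra hle
      push_neg at hle
      set t := (tstar + δ) / 2 with htdef
      have ht1 : tstar < t := by rw [htdef]; linarith
      have ht2 : t < δ := by rw [htdef]; linarith
      have ht0 : 0 < t := lt_trans htstar0 ht1
      have htν : K * t ^ p < 1 := by
        apply (key 1 one_pos t ht0.le).2
        rw [← hνval]; linarith
      have hc := (equiv t ht0 htν).1 (h t ⟨ht0, ht2⟩)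
      have := (key cst hcst0 t ht0.le).1 hc
      rw [← htst] at this
      linarith
    · rintro ⟨hδ0, hδt⟩
      refine ⟨⟨hδ0, lt_of_le_of_lt hδt htstarν⟩, ?_⟩
      rintro t ⟨ht0, htδ⟩
      have htt : t < tstar := lt_of_lt_of_le htδ hδt
      have hu : K * t ^ p < cst := by
        apply (key cst hcst0 t ht0.le).2
        rw [← htst]; exact htt
      exact (equiv t ht0 (lt_trans hu hcst1)).2 hu
  have hρval : ρ = tstar := by rw [hρ, hsetρ, csSup_Ioc htstar0]
  -- assemble
  refine ⟨fun t _ => (hderiv t).hasDerivWithinAt, ?_, ?_, ?_, ?_, hνval, ?_, ?_⟩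
  · rw [hf, Real.zero_rpow hp1ne]; ring
  · rw [hf', Real.zero_rpow (ne_of_gt hp0)]; ring
  · intro x hx y hy hxy
    rw [hf', hf']
    have := Real.rpow_lt_rpow hx hxy hp0
    have := mul_lt_mul_of_pos_left this hK
    linarith
  · intro x hx y hy hxy
    simp only [Set.mem_Ioo] at hx hy
    have hux : K * x ^ p < 1 := by
      apply (key 1 one_pos x hx.1.le).2; rw [← hνval]; exact hx.2
    have huy : K * y ^ p < 1 := by
      apply (key 1 one_pos y hy.1.le).2; rw [← hνval]; exact hy.2
    show (f x / f' x - x) / x ^ (p+1) < (f y / f' y - y) / y ^ (p+1)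
    rw [ident1 x hx.1 hux, ident1 y hy.1 huy]
    have hxy' : K * x ^ p < K * y ^ p :=
      mul_lt_mul_of_pos_left (Real.rpow_lt_rpow hx.1.le hxy hp0) hK
    have hdy : 0 < (p+1) * (1 - K * y ^ p) := mul_pos hp1' (by linarith)
    have hdx : 0 < (p+1) * (1 - K * x ^ p) := mul_pos hp1' (by linarith)
    apply div_lt_div_of_pos_left (mul_pos hp0 hK) hdy
    nlinarith
  · rw [hρval, htst]
    have hden2 : K * (p - ω₁ * ((1 + ϑ) * lam + ϑ - p) - ω₂ * (p+1) + 1) = D * K := by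
      rw [hD, hA, hM]; ring
    have hbase : cst / K
        = (1 - M - ω₂) * (p + 1) / (K * (p - ω₁ * ((1 + ϑ) * lam + ϑ - p) - ω₂ * (p+1) + 1)) := by
      rw [hden2, hcst, div_div]
    rw [hbase]
  · rw [hρval]; exact htstarν
end

section
/- Let γ > 0 and define f : [0, 1/γ) → ℝ by f(t) = t/(1 − γt) − 2t. Then f(0) = 0, f'(0) = −1, f' is strictly increasing and convex (so t ↦ [f(t)/f'(t) − t]/t² is strictly increasing on (0, ν)), and, with constants 0 ≤ ϑ < 1, 0 ≤ ω₂ < ω₁, ω₁ϑ + ω₂ < 1, 0 ≤ λ < (1 − ω₂ − ω₁ϑ)/(ω₁(1+ϑ)), a := ω₁(1+ϑ)(1−3λ) + 4(1 − ω₁ϑ − ω₂), b := 1 − ω₁[(1+ϑ)λ + ϑ] − ω₂, the scalars ν := sup{t ∈ [0, 1/γ) : f'(t) < 0} and ρ := sup{δ ∈ (0, ν) : ω₁(1+ϑ)(1+λ)(f(t)/(t f'(t)) − 1) + ω₁[(1+ϑ)λ + ϑ] + ω₂ < 1 for all t ∈ (0, δ)} satisfy ν = (√2 − 1)/(√2 γ),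 ρ = (a − √(a² − 8b²))/(4γb), and ρ < ν < 1/γ. -/
set_option maxHeartbeats 1000000

private lemma quad_pos' {γ a b e t : ℝ} (hb : 0 < b)
    (he2 : e ^ 2 = a ^ 2 - 8 * b ^ 2)
    (h2 : 0 < a - e - 4 * γ * b * t) (h3 : 0 < a + e - 4 * γ * b * t) :
    0 < 2 * b * γ ^ 2 * t ^ 2 - a * γ * t + b := by
  nlinarith [mul_pos h2 h3]

private lemma quad_root' {γ a b e : ℝ} (hγ : 0 < γ) (hb : 0 < b)
    (he2 : e ^ 2 = a ^ 2 - 8 * b ^ 2) :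
    2 * b * γ ^ 2 * ((a - e) / (4 * γ * b)) ^ 2 - a * γ * ((a - e) / (4 * γ * b)) + b = 0 := by
  have h1 : (4 * γ * b) ≠ 0 := by positivity
  field_simp
  linear_combination 2 * he2

private lemma conv_aux {ux uy p q : ℝ} (hux : 0 < ux) (huy : 0 < uy)
    (hp : 0 ≤ p) (hq : 0 ≤ q) (hpq : p + q = 1) :
    1 / (p * ux + q * uy) ^ 2 ≤ p * (1 / ux ^ 2) + q * (1 / uy ^ 2) := by
  have hq' : q = 1 - p := by linarith
  subst hq'
  have hw : 0 < p * ux + (1 - p) * uy := by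
    rcases le_total ux uy with h | h
    · nlinarith [mul_nonneg hq (by linarith : (0:ℝ) ≤ uy - ux)]
    · nlinarith [mul_nonneg hp (by linarith : (0:ℝ) ≤ ux - uy)]
  rw [mul_one_div, mul_one_div,
    div_add_div _ _ (by positivity : (ux ^ 2 : ℝ) ≠ 0) (by positivity : (uy ^ 2 : ℝ) ≠ 0),
    div_le_div_iff₀ (by positivity) (by positivity)]
  have hfac : 0 ≤ p * (1 - p) * (ux - uy) ^ 2 * (p * ux ^ 2 + (1 - p) * uy ^ 2 + 2 * ux * uy) := by
    have h0 : 0 ≤ p * ux ^ 2 + (1 - p) * uy ^ 2 + 2 * ux * uy := by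
      nlinarith [mul_nonneg hp (sq_nonneg ux),
        mul_nonneg (by linarith : (0:ℝ) ≤ 1 - p) (sq_nonneg uy), mul_pos hux huy]
    have h1 : 0 ≤ p * (1 - p) := mul_nonneg hp (by linarith)
    positivity
  nlinarith [hfac]

theorem stmt_15 (γ : ℝ) (hγ : 0 < γ)
    (f f' : ℝ → ℝ)
    (hf : ∀ t, f t = t / (1 - γ * t) - 2 * t)
    (hf' : ∀ t, f' t = 1 / (1 - γ * t) ^ 2 - 2)
    (ν : ℝ) (hν : ν = sSup {t | t ∈ Set.Ico 0 (1 / γ) ∧ f' t < 0})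
    (ϑ ω₁ ω₂ lam : ℝ)
    (hϑ0 : 0 ≤ ϑ) (hϑ1 : ϑ < 1) (hω₂0 : 0 ≤ ω₂) (hω₁₂ : ω₂ < ω₁)
    (hωϑ : ω₁ * ϑ + ω₂ < 1)
    (hlam0 : 0 ≤ lam) (hlam : lam < (1 - ω₂ - ω₁ * ϑ) / (ω₁ * (1 + ϑ)))
    (a b : ℝ)
    (ha : a = ω₁ * (1 + ϑ) * (1 - 3 * lam) + 4 * (1 - ω₁ * ϑ - ω₂))
    (hb : b = 1 - ω₁ * ((1 + ϑ) * lam + ϑ) - ω₂)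
    (ρ : ℝ)
    (hρ : ρ = sSup {δ | δ ∈ Set.Ioo 0 ν ∧ ∀ t ∈ Set.Ioo 0 δ,
      ω₁ * (1 + ϑ) * (1 + lam) * (f t / (t * f' t) - 1)
        + ω₁ * ((1 + ϑ) * lam + ϑ) + ω₂ < 1}) :
    f 0 = 0 ∧ f' 0 = -1 ∧
      (∀ t ∈ Set.Ico 0 (1 / γ), HasDerivWithinAt f (f' t) (Set.Ico 0 (1 / γ)) t) ∧
      StrictMonoOn f' (Set.Ico 0 (1 / γ)) ∧
      ConvexOn ℝ (Set.Ico 0 (1 / γ)) f' ∧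
      StrictMonoOn (fun t => (f t / f' t - t) / t ^ 2) (Set.Ioo 0 ν) ∧
      ν = (Real.sqrt 2 - 1) / (Real.sqrt 2 * γ) ∧
      ρ = (a - Real.sqrt (a ^ 2 - 8 * b ^ 2)) / (4 * γ * b) ∧
      ρ < ν ∧ ν < 1 / γ := by
  have hfe : f = fun t => t / (1 - γ * t) - 2 * t := funext hf
  have hf'e : f' = fun t => 1 / (1 - γ * t) ^ 2 - 2 := funext hf'
  subst hfe hf'e
  set s := Real.sqrt 2 with hs
  have hs2 : s ^ 2 = 2 := Real.sq_sqrt (by norm_num)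
  clear_value s
  have hs0 : 0 ≤ s := by rw [hs]; exact Real.sqrt_nonneg 2
  have hs1 : 1 < s := by nlinarith
  set ν₀ : ℝ := (s - 1) / (s * γ) with hν₀def
  clear_value ν₀
  have hγν₀ : γ * ν₀ = 1 - 1 / s := by
    rw [hν₀def]; field_simp
  have hν₀pos : 0 < ν₀ := by rw [hν₀def]; exact div_pos (by linarith) (by positivity)
  have hν₀lt : ν₀ < 1 / γ := by
    rw [hν₀def, div_lt_div_iff₀ (by positivity) hγ]
    nlinarith
  have huu : ∀ t : ℝ, t < 1 / γ → 0 < 1 - γ * t := by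
    intro t ht
    nlinarith [(lt_div_iff₀ hγ).mp ht]
  have hs5 : (1 / s) ^ 2 = 1 / 2 := by rw [div_pow, hs2, one_pow]
  have hs4 : (0:ℝ) < 1 / s := by positivity
  -- characterization of ν₀
  have hlt_iff : ∀ t : ℝ, 0 ≤ t → t < 1 / γ → (t < ν₀ ↔ 0 < 2 * (1 - γ * t) ^ 2 - 1) := by
    clear * - hγ hs0 hs1 hs2 hs4 hs5 hν₀def huu
    intro t ht0 ht1
    have hu : 0 < 1 - γ * t := huu t ht1
    constructor
    · intro h
      rw [hν₀def] at h
      have h2 : γ * t < 1 - 1 / s := by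
        have := (lt_div_iff₀ (by positivity : (0:ℝ) < s * γ)).mp h
        have hss : s * (1 / s) = 1 := by field_simp
        nlinarith [hss]
      have h3 : 1 / s < 1 - γ * t := by linarith
      nlinarith [hs5, hs4, h3, mul_pos hs4 hs4]
    · intro h
      have h3 : 1 / s < 1 - γ * t := by
        nlinarith [hs5, hs4, hu]
      rw [hν₀def, lt_div_iff₀ (by positivity : (0:ℝ) < s * γ)]
      nlinarith
  -- ν = ν₀
  have hset : {t : ℝ | t ∈ Set.Ico 0 (1 / γ) ∧ (fun t => 1 / (1 - γ * t) ^ 2 - 2) t < 0}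
      = Set.Ico 0 ν₀ := by
    clear * - hγ hν₀lt hν₀pos hlt_iff huu
    ext t
    simp only [Set.mem_setOf_eq, Set.mem_Ico]
    constructor
    · rintro ⟨⟨ht0, ht1⟩, hneg⟩
      refine ⟨ht0, ?_⟩
      rw [hlt_iff t ht0 ht1]
      have hu : 0 < 1 - γ * t := huu t ht1
      have hu2 : 0 < (1 - γ * t) ^ 2 := by positivity
      have : 1 / (1 - γ * t) ^ 2 < 2 := by linarith
      rw [div_lt_iff₀ hu2] at this
      nlinarith
    · rintro ⟨ht0, ht1⟩
      have ht1' : t < 1 / γ := ht1.trans hν₀lt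
      refine ⟨⟨ht0, ht1'⟩, ?_⟩
      have hd := (hlt_iff t ht0 ht1').mp ht1
      have hu : 0 < 1 - γ * t := huu t ht1'
      have hu2 : 0 < (1 - γ * t) ^ 2 := by positivity
      have : 1 / (1 - γ * t) ^ 2 < 2 := by
        rw [div_lt_iff₀ hu2]; nlinarith
      linarith
  have hνeq : ν = ν₀ := by rw [hν, hset, csSup_Ico hν₀pos]
  -- basic positivity of constants
  have hω₁pos : 0 < ω₁ := lt_of_le_of_lt hω₂0 hω₁₂
  have hA : 0 < ω₁ * (1 + ϑ) * (1 + lam) := by positivity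
  set A : ℝ := ω₁ * (1 + ϑ) * (1 + lam) with hAdef
  clear_value A
  have hbpos : 0 < b := by
    clear * - hlam hω₁pos hϑ0 hb hlam0 hω₂0
    have := (lt_div_iff₀ (by positivity : (0:ℝ) < ω₁ * (1 + ϑ))).mp hlam
    rw [hb]; nlinarith
  have haA : a = A + 4 * b := by rw [ha, hb, hAdef]; ring
  have hapos : 0 < a := by clear * - haA hA hbpos; nlinarith
  have hD : 0 < a ^ 2 - 8 * b ^ 2 := by clear * - haA hA hbpos; nlinarith
  set e : ℝ := Real.sqrt (a ^ 2 - 8 * b ^ 2) with hedef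
  have he2 : e ^ 2 = a ^ 2 - 8 * b ^ 2 := Real.sq_sqrt hD.le
  have hepos : 0 < e := Real.sqrt_pos.mpr hD
  have helt : e < a := by
    rw [hedef]
    exact (Real.sqrt_lt' hapos).mpr (by clear * - hbpos hapos; nlinarith)
  set r : ℝ := (a - e) / (4 * γ * b) with hrdef
  clear_value r
  have hrpos : 0 < r := by rw [hrdef]; exact div_pos (by linarith) (by positivity)
  -- r is a root of the quadratic
  have hq0 : 2 * b * γ ^ 2 * r ^ 2 - a * γ * r + b = 0 := by
    rw [hrdef]; exact quad_root' hγ hbpos he2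
  -- q(t) > 0 for 0 < t < r
  have hqpos : ∀ t : ℝ, 0 < t → t < r → 0 < 2 * b * γ ^ 2 * t ^ 2 - a * γ * t + b := by
    intro t ht0 htr
    clear * - hγ hbpos hepos he2 hrdef ht0 htr
    rw [hrdef] at htr
    have h1 : t * (4 * γ * b) < a - e := (lt_div_iff₀ (by positivity)).mp htr
    have h2 : 0 < a - e - 4 * γ * b * t := by nlinarith
    have h3 : 0 < a + e - 4 * γ * b * t := by nlinarith
    exact quad_pos' hbpos he2 h2 h3
  -- r < ν₀
  have hdν₀ : 2 * (1 - γ * ν₀) ^ 2 - 1 = 0 := by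
    rw [hγν₀]
    have : (1 : ℝ) - (1 - 1 / s) = 1 / s := by ring
    rw [this, hs5]
    norm_num
  have hqν₀ : 2 * b * γ ^ 2 * ν₀ ^ 2 - a * γ * ν₀ + b = -(A * γ * ν₀) := by
    rw [haA]; linear_combination b * hdν₀
  have hrν₀ : r < ν₀ := by
    by_contra h
    push_neg at h
    rcases eq_or_lt_of_le h with h' | h'
    · rw [← h'] at hq0
      linarith [mul_pos (mul_pos hA hγ) hν₀pos]
    · have := hqpos ν₀ hν₀pos h'
      linarith [mul_pos (mul_pos hA hγ) hν₀pos]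
  -- formula for the ratio
  have hform2' : ∀ t : ℝ, 0 < t → t < ν₀ →
      (fun t => t / (1 - γ * t) - 2 * t) t / (t * ((fun t => 1 / (1 - γ * t) ^ 2 - 2) t)) - 1
        = γ * t / (2 * (1 - γ * t) ^ 2 - 1) := by
    clear * - hγ hν₀lt hlt_iff huu
    intro t ht0 htν
    have ht1 : t < 1 / γ := htν.trans hν₀lt
    have hu : 0 < 1 - γ * t := huu t ht1
    have hd : 0 < 2 * (1 - γ * t) ^ 2 - 1 := (hlt_iff t ht0.le ht1).mp htν
    have hf'neg : 1 / (1 - γ * t) ^ 2 - 2 < 0 := by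
      have hu2 : 0 < (1 - γ * t) ^ 2 := by positivity
      rw [sub_neg, div_lt_iff₀ hu2]; nlinarith
    simp only
    rw [div_sub_one (by
      intro h
      exact absurd h (mul_ne_zero ht0.ne' hf'neg.ne)), div_eq_div_iff
        (mul_ne_zero ht0.ne' hf'neg.ne) hd.ne']
    have hv : (1 - γ * t) * (1 - γ * t)⁻¹ = 1 := mul_inv_cancel₀ hu.ne'
    rw [one_div, ← inv_pow]
    linear_combination t * (2 * (1 - γ * t) - 2 * ((1 - γ * t) * (1 - γ * t)⁻¹ - 1) - 4 + (1 - γ * t)⁻¹) * hv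
  have hform : ∀ t : ℝ, 0 < t → t < ν₀ →
      ((fun t => t / (1 - γ * t) - 2 * t) t / ((fun t => 1 / (1 - γ * t) ^ 2 - 2) t) - t) / t ^ 2
        = γ / (2 * (1 - γ * t) ^ 2 - 1) := by
    clear * - hγ hν₀lt hlt_iff huu hform2'
    intro t ht0 htν
    have ht1 : t < 1 / γ := htν.trans hν₀lt
    have hu : 0 < 1 - γ * t := huu t ht1
    have hd : 0 < 2 * (1 - γ * t) ^ 2 - 1 := (hlt_iff t ht0.le ht1).mp htν
    have hf'neg : 1 / (1 - γ * t) ^ 2 - 2 < 0 := by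
      have hu2 : 0 < (1 - γ * t) ^ 2 := by positivity
      rw [sub_neg, div_lt_iff₀ hu2]; nlinarith
    have key : ∀ F G : ℝ, G ≠ 0 → (F / G - t) / t ^ 2 = (F / (t * G) - 1) / t := by
      intro F G hG
      field_simp
    simp only
    rw [key _ _ hf'neg.ne]
    rw [show (t / (1 - γ * t) - 2 * t) / (t * (1 / (1 - γ * t) ^ 2 - 2)) - 1
        = γ * t / (2 * (1 - γ * t) ^ 2 - 1) from hform2' t ht0 htν]
    rw [mul_comm γ t, mul_div_assoc]
    exact mul_div_cancel_left₀ _ ht0.ne'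
  -- the condition set equals Ioc 0 r
  have hcond : ∀ t : ℝ, 0 < t → t < ν₀ →
      ((A * ((fun t => t / (1 - γ * t) - 2 * t) t
          / (t * ((fun t => 1 / (1 - γ * t) ^ 2 - 2) t)) - 1)
        + ω₁ * ((1 + ϑ) * lam + ϑ) + ω₂ < 1)
        ↔ 0 < 2 * b * γ ^ 2 * t ^ 2 - a * γ * t + b) := by
    clear * - hγ hν₀lt hlt_iff hform2' hA hAdef haA hb hbpos huu
    intro t ht0 htν
    have ht1 : t < 1 / γ := htν.trans hν₀lt
    have hd : 0 < 2 * (1 - γ * t) ^ 2 - 1 := (hlt_iff t ht0.le ht1).mp htν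
    rw [show ((fun t => t / (1 - γ * t) - 2 * t) t
          / (t * ((fun t => 1 / (1 - γ * t) ^ 2 - 2) t)) - 1)
        = γ * t / (2 * (1 - γ * t) ^ 2 - 1) from hform2' t ht0 htν]
    rw [show A * (γ * t / (2 * (1 - γ * t) ^ 2 - 1))
        = A * (γ * t) / (2 * (1 - γ * t) ^ 2 - 1) from (mul_div_assoc _ _ _).symm]
    have hid : 2 * b * γ ^ 2 * t ^ 2 - a * γ * t + b
        = b * (2 * (1 - γ * t) ^ 2 - 1) - A * (γ * t) := by rw [haA]; ring
    constructor
    · intro h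
      have h' : A * (γ * t) / (2 * (1 - γ * t) ^ 2 - 1) < b := by rw [hb]; linarith
      rw [div_lt_iff₀ hd] at h'
      rw [hid]; linarith
    · intro h
      rw [hid] at h
      have h' : A * (γ * t) < b * (2 * (1 - γ * t) ^ 2 - 1) := by linarith
      rw [← div_lt_iff₀ hd] at h'
      rw [hb] at h'
      linarith
  have hsetρ : {δ : ℝ | δ ∈ Set.Ioo 0 ν ∧ ∀ t ∈ Set.Ioo 0 δ,
      A * ((fun t => t / (1 - γ * t) - 2 * t) t
        / (t * ((fun t => 1 / (1 - γ * t) ^ 2 - 2) t)) - 1)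
        + ω₁ * ((1 + ϑ) * lam + ϑ) + ω₂ < 1} = Set.Ioc 0 r := by
    rw [hνeq]
    ext δ
    simp only [Set.mem_setOf_eq, Set.mem_Ioo, Set.mem_Ioc]
    constructor
    · rintro ⟨⟨hδ0, hδν⟩, hall⟩
      refine ⟨hδ0, ?_⟩
      by_contra h
      push_neg at h
      have hrδ := hall r ⟨hrpos, h⟩
      rw [hcond r hrpos hrν₀] at hrδ
      linarith [hq0]
    · rintro ⟨hδ0, hδr⟩
      refine ⟨⟨hδ0, lt_of_le_of_lt hδr hrν₀⟩, ?_⟩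
      rintro t ⟨ht0, htδ⟩
      have htr : t < r := lt_of_lt_of_le htδ hδr
      rw [hcond t ht0 (htr.trans hrν₀)]
      exact hqpos t ht0 htr
  have hρeq : ρ = r := by rw [hρ, hsetρ, csSup_Ioc hrpos]
  refine ⟨by norm_num, by norm_num, ?_, ?_, ?_, ?_, by rw [hνeq], by rw [hρeq, hrdef, hedef],
    by rw [hρeq, hνeq]; exact hrν₀, by rw [hνeq]; exact hν₀lt⟩
  · -- HasDerivWithinAt
    clear * - hγ huu
    rintro t ⟨ht0, ht1⟩
    have hu : 0 < 1 - γ * t := huu t ht1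
    have h1 : HasDerivAt (fun x : ℝ => 1 - γ * x) (-γ) t := by
      simpa using ((hasDerivAt_id t).const_mul γ).const_sub 1
    have h2 := (hasDerivAt_id t).div h1 hu.ne'
    have h3 := h2.sub ((hasDerivAt_id t).const_mul 2)
    have h4 : HasDerivAt (fun x : ℝ => x / (1 - γ * x) - 2 * x)
        (1 / (1 - γ * t) ^ 2 - 2) t := by
      have h5 : (1 * (1 - γ * t) - id t * -γ) / (1 - γ * t) ^ 2 - 2 * 1 = 1 / (1 - γ * t) ^ 2 - 2 := by
        simp only [id]; ring
      exact h3.congr_deriv h5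
    exact h4.hasDerivWithinAt
  · -- StrictMonoOn f'
    clear * - hγ huu
    rintro x ⟨hx0, hx1⟩ y ⟨hy0, hy1⟩ hxy
    have huy : 0 < 1 - γ * y := huu y hy1
    have hux : 0 < 1 - γ * x := by nlinarith
    have h2 : (1 - γ * y) ^ 2 < (1 - γ * x) ^ 2 := by
      nlinarith [mul_pos (mul_pos hγ (sub_pos.mpr hxy))
        (show (0:ℝ) < (1 - γ * x) + (1 - γ * y) by linarith)]
    have := div_lt_div_of_pos_left one_pos (by positivity : (0:ℝ) < (1 - γ * y) ^ 2) h2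
    simp only
    linarith
  · -- ConvexOn f'
    clear * - hγ huu
    refine ⟨convex_Ico _ _, ?_⟩
    rintro x ⟨hx0, hx1⟩ y ⟨hy0, hy1⟩ p q hp hq hpq
    have hux : 0 < 1 - γ * x := huu x hx1
    have huy : 0 < 1 - γ * y := huu y hy1
    have hwid : 1 - γ * (p * x + q * y) = p * (1 - γ * x) + q * (1 - γ * y) := by
      linear_combination (-1 : ℝ) * hpq
    have hw : 0 < 1 - γ * (p * x + q * y) := by
      rw [hwid]
      rcases le_total (1 - γ * x) (1 - γ * y) with h | h
      · nlinarith [mul_nonneg hq (by linarith : (0:ℝ) ≤ (1 - γ * y) - (1 - γ * x))]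
      · nlinarith [mul_nonneg hp (by linarith : (0:ℝ) ≤ (1 - γ * x) - (1 - γ * y))]
    simp only [smul_eq_mul]
    have key : 1 / (1 - γ * (p * x + q * y)) ^ 2
        ≤ p * (1 / (1 - γ * x) ^ 2) + q * (1 / (1 - γ * y) ^ 2) := by
      rw [hwid]
      exact conv_aux hux huy hp hq hpq
    have expand : p * (1 / (1 - γ * x) ^ 2 - 2) + q * (1 / (1 - γ * y) ^ 2 - 2)
        = p * (1 / (1 - γ * x) ^ 2) + q * (1 / (1 - γ * y) ^ 2) - 2 * (p + q) := by ring
    rw [expand, hpq]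
    linarith
  · -- StrictMonoOn ratio
    rw [hνeq]
    clear * - hγ huu hν₀lt hlt_iff hform
    rintro x ⟨hx0, hxν⟩ y ⟨hy0, hyν⟩ hxy
    simp only
    rw [hform x hx0 hxν, hform y hy0 hyν]
    have hx1 : x < 1 / γ := hxν.trans hν₀lt
    have hy1 : y < 1 / γ := hyν.trans hν₀lt
    have hdx : 0 < 2 * (1 - γ * x) ^ 2 - 1 := (hlt_iff x hx0.le hx1).mp hxν
    have hdy : 0 < 2 * (1 - γ * y) ^ 2 - 1 := (hlt_iff y hy0.le hy1).mp hyν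
    have huy : 0 < 1 - γ * y := huu y hy1
    have hux : 0 < 1 - γ * x := huu x hx1
    have hlt : 2 * (1 - γ * y) ^ 2 - 1 < 2 * (1 - γ * x) ^ 2 - 1 := by
      nlinarith [mul_pos (mul_pos hγ (sub_pos.mpr hxy))
        (show (0:ℝ) < (1 - γ * x) + (1 - γ * y) by linarith)]
    exact div_lt_div_of_pos_left hγ hdy hlt
end
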